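/- Let 𝒟 be a dyadic grid on ℝⁿ, 0 ≤ α < n, f ∈ L^∞ with compact support, 𝒮 ⊆ 𝒟 a sparse family (each Q ∈ 𝒮 contains a measurable E_Q ⊆ Q with ℒ(E_Q) ≥ ½ℒ(Q), and the sets E_Q are pairwise disjoint) satisfying the pointwise bound M_α^𝒟 f(x) ≤ c Σ_{Q∈𝒮} ℓ(Q)^α (⨍_Q |f|) 1_{E_Q}(x) for all x. Then for any locally finite Borel measure μ, ∫ M_α^𝒟 f dμ ≤ 2c ∫ Mf(x) M_α μ(x) dx. -/

import Mathlib

open MeasureTheory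
open scoped ENNReal

/-- An axis-parallel (half-open) cube with corner `c` and side length `l`. -/
def cubeOf (n : ℕ) (c : Fin n → ℝ) (l : ℝ) : Set (EuclideanSpace ℝ (Fin n)) :=
  {y | ∀ i, c i ≤ y i ∧ y i < c i + l}

lemma cubeOf_eq (n : ℕ) (c : Fin n → ℝ) (l : ℝ) :
    cubeOf n c l = (MeasurableEquiv.toLp 2 (Fin n → ℝ)).symm ⁻¹'
      (Set.univ.pi fun i => Set.Ico (c i) (c i + l)) := by
  ext y
  simp [cubeOf, Set.mem_pi, MeasurableEquiv.coe_toLp_symm, Set.mem_Ico]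

lemma volume_cubeOf (n : ℕ) (c : Fin n → ℝ) (l : ℝ) :
    volume (cubeOf n c l) = ENNReal.ofReal l ^ n := by
  rw [cubeOf_eq,
    (EuclideanSpace.volume_preserving_symm_measurableEquiv_toLp (Fin n)).measure_preimage
      ((MeasurableSet.univ_pi fun i => measurableSet_Ico).nullMeasurableSet)]
  rw [volume_pi_pi]
  simp [Real.volume_Ico, Finset.prod_const]


/-- The fractional maximal function of `f` over cubes. -/
noncomputable def cubeFracMaxFn (n : ℕ) (α : ℝ) (f : EuclideanSpace ℝ (Fin n) → ℝ)
    (x : EuclideanSpace ℝ (Fin n)) : ℝ≥0∞ :=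
  ⨆ (c : Fin n → ℝ) (l : ℝ) (_ : 0 < l) (_ : x ∈ cubeOf n c l),
    ENNReal.ofReal (l ^ α) * (∫⁻ y in cubeOf n c l, (‖f y‖₊ : ℝ≥0∞))
      / volume (cubeOf n c l)

/-- The fractional maximal function of a measure over cubes. -/
noncomputable def cubeFracMaxMeas (n : ℕ) (α : ℝ)
    (μ : Measure (EuclideanSpace ℝ (Fin n))) (x : EuclideanSpace ℝ (Fin n)) : ℝ≥0∞ :=
  ⨆ (c : Fin n → ℝ) (l : ℝ) (_ : 0 < l) (_ : x ∈ cubeOf n c l),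
    ENNReal.ofReal (l ^ α) * μ (cubeOf n c l) / volume (cubeOf n c l)

/-- If a dyadic fractional maximal function `g = M_α^𝒟 f` is pointwise dominated by a
sparse sum, then `∫ g dμ ≤ 2c ∫ Mf · M_α μ dx`. -/
theorem sparse_implies_endpoint (n : ℕ) (α : ℝ) (hα : 0 ≤ α) (hαn : α < n)
    (c : ℝ≥0∞) (ι : Type*) [Countable ι]
    (cc : ι → Fin n → ℝ) (l : ι → ℝ) (hl : ∀ i, 0 < l i)
    (Esets : ι → Set (EuclideanSpace ℝ (Fin n)))
    (hEmeas : ∀ i, MeasurableSet (Esets i))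
    (hEsub : ∀ i, Esets i ⊆ cubeOf n (cc i) (l i))
    (hEhalf : ∀ i, volume (cubeOf n (cc i) (l i)) ≤ 2 * volume (Esets i))
    (hdisj : Pairwise (Function.onFun Disjoint Esets))
    (f : EuclideanSpace ℝ (Fin n) → ℝ)
    (hfb : ∃ M : ℝ, ∀ x, |f x| ≤ M) (hfc : HasCompactSupport f)
    (g : EuclideanSpace ℝ (Fin n) → ℝ≥0∞)
    (hg : ∀ x, g x ≤ c * ∑' i, Set.indicator (Esets i)
        (fun _ => ENNReal.ofReal (l i ^ α) *
          (∫⁻ y in cubeOf n (cc i) (l i), (‖f y‖₊ : ℝ≥0∞))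
            / volume (cubeOf n (cc i) (l i))) x)
    (μ : Measure (EuclideanSpace ℝ (Fin n))) [IsLocallyFiniteMeasure μ] :
    ∫⁻ x, g x ∂μ ≤
      2 * c * ∫⁻ x, cubeFracMaxFn n 0 f x * cubeFracMaxMeas n α μ x := by
  classical
  set F : EuclideanSpace ℝ (Fin n) → ℝ≥0∞ :=
    fun x => cubeFracMaxFn n 0 f x * cubeFracMaxMeas n α μ x with hF
  set Q : ι → Set (EuclideanSpace ℝ (Fin n)) := fun i => cubeOf n (cc i) (l i) with hQ
  set I : ι → ℝ≥0∞ := fun i => ∫⁻ y in Q i, (‖f y‖₊ : ℝ≥0∞) with hI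
  set V : ι → ℝ≥0∞ := fun i => volume (Q i) with hV
  set A : ι → ℝ≥0∞ := fun i => ENNReal.ofReal (l i ^ α) with hA
  have hV0 : ∀ i, V i ≠ 0 := by
    intro i
    rw [hV, hQ]; simp only [volume_cubeOf]
    exact pow_ne_zero _ (by simp [ENNReal.ofReal_eq_zero, not_le, hl i])
  have hVt : ∀ i, V i ≠ ∞ := by
    intro i
    rw [hV, hQ]; simp only [volume_cubeOf]
    exact ENNReal.pow_ne_top ENNReal.ofReal_ne_top
  -- key per-index bound
  have key : ∀ i, A i * I i / V i * μ (Esets i) ≤ 2 * ∫⁻ x in Esets i, F x := by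
    intro i
    have hL : ∀ x ∈ Esets i, (I i / V i) * (A i * μ (Q i) / V i) ≤ F x := by
      intro x hx
      have hxQ : x ∈ Q i := hEsub i hx
      have h1 : I i / V i ≤ cubeFracMaxFn n 0 f x := by
        refine le_iSup_of_le (cc i) (le_iSup_of_le (l i) (le_iSup_of_le (hl i)
          (le_iSup_of_le hxQ ?_)))
        simp [hI, hV, hQ]
      have h2 : A i * μ (Q i) / V i ≤ cubeFracMaxMeas n α μ x := by
        refine le_iSup_of_le (cc i) (le_iSup_of_le (l i) (le_iSup_of_le (hl i)
          (le_iSup_of_le hxQ ?_)))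
        simp [hA, hV, hQ]
      exact mul_le_mul' h1 h2
    have hlow : (I i / V i) * (A i * μ (Q i) / V i) * volume (Esets i)
        ≤ ∫⁻ x in Esets i, F x := by
      rw [← setLIntegral_const]
      exact setLIntegral_mono' (hEmeas i) hL
    have halg : A i * I i / V i * μ (Q i) =
        (I i / V i) * (A i * μ (Q i) / V i) * V i := by
      rw [div_eq_mul_inv, div_eq_mul_inv, div_eq_mul_inv]
      rw [show I i * (V i)⁻¹ * (A i * μ (Q i) * (V i)⁻¹) * V i
          = A i * I i * (V i)⁻¹ * μ (Q i) * ((V i)⁻¹ * V i) from by ring,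
        ENNReal.inv_mul_cancel (hV0 i) (hVt i), mul_one]
    calc A i * I i / V i * μ (Esets i)
        ≤ A i * I i / V i * μ (Q i) := by
          exact mul_le_mul_right (measure_mono (hEsub i)) _
      _ = (I i / V i) * (A i * μ (Q i) / V i) * V i := halg
      _ ≤ (I i / V i) * (A i * μ (Q i) / V i) * (2 * volume (Esets i)) := by
          exact mul_le_mul_right (hEhalf i) _
      _ = 2 * ((I i / V i) * (A i * μ (Q i) / V i) * volume (Esets i)) := by ring
      _ ≤ 2 * ∫⁻ x in Esets i, F x := mul_le_mul_right hlow _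
  -- measurability of summands
  have hmeas : ∀ i, Measurable (Set.indicator (Esets i)
      (fun _ : EuclideanSpace ℝ (Fin n) => A i * I i / V i)) :=
    fun i => measurable_const.indicator (hEmeas i)
  calc ∫⁻ x, g x ∂μ
      ≤ ∫⁻ x, c * ∑' i, Set.indicator (Esets i)
          (fun _ => A i * I i / V i) x ∂μ := lintegral_mono hg
    _ = c * ∫⁻ x, ∑' i, Set.indicator (Esets i) (fun _ => A i * I i / V i) x ∂μ := by
        rw [lintegral_const_mul'' _ ((Measurable.ennreal_tsum hmeas).aemeasurable)]
    _ = c * ∑' i, ∫⁻ x, Set.indicator (Esets i) (fun _ => A i * I i / V i) x ∂μ := by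
        rw [lintegral_tsum fun i => (hmeas i).aemeasurable]
    _ = c * ∑' i, A i * I i / V i * μ (Esets i) := by
        congr 1
        refine tsum_congr fun i => ?_
        rw [lintegral_indicator (hEmeas i), setLIntegral_const]
    _ ≤ c * ∑' i, 2 * ∫⁻ x in Esets i, F x := by
        exact mul_le_mul_right (ENNReal.tsum_le_tsum key) _
    _ = 2 * c * ∑' i, ∫⁻ x in Esets i, F x := by
        rw [ENNReal.tsum_mul_left]; ring
    _ = 2 * c * ∫⁻ x in ⋃ i, Esets i, F x := by
        rw [lintegral_iUnion hEmeas hdisj]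
    _ ≤ 2 * c * ∫⁻ x, F x := by
        exact mul_le_mul_right (setLIntegral_le_lintegral _ _) _
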